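/- arXiv:2109.01904 — 2 statements merged into one kernel-verified Lean document; each statement's English description precedes it below -/
import Mathlib

section
/- Let Ω be a finite probability space with probability measure P, and let Y_x, Y_{x'} : Ω → ℕ be random variables (counterfactual outcomes under interventions x and x'). If P(Y_{x'} ≥ k ∣ Y_{x'} = h) ≥ P(Y_x ≥ k ∣ Y_{x'} = h) whenever the conditioning event has positive probability, and k > h, then P(Y_x = l ∣ Y_{x'} = h) = 0 for every l ≥ k. -/
open scoped Classical in
/-- Probability of an event `A` under a (finitely supported) measure given by weights `P`. -/
noncomputable def Pr {Ω : Type*} [Fintype Ω] (P : Ω → ℝ) (A : Set Ω) : ℝ :=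
  ∑ ω, if ω ∈ A then P ω else 0

open scoped Classical in
lemma Pr_nonneg {Ω : Type*} [Fintype Ω] (P : Ω → ℝ) (hP : ∀ ω, 0 ≤ P ω) (A : Set Ω) :
    0 ≤ Pr P A := by
  apply Finset.sum_nonneg
  intro ω _
  split
  · exact hP ω
  · exact le_rfl

open scoped Classical in
lemma Pr_mono {Ω : Type*} [Fintype Ω] (P : Ω → ℝ) (hP : ∀ ω, 0 ≤ P ω) {A B : Set Ω}
    (hAB : A ⊆ B) : Pr P A ≤ Pr P B := by
  apply Finset.sum_le_sum
  intro ω _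
  split
  · split
    · exact le_refl _
    · exact absurd (hAB ‹_›) ‹_›
  · split
    · exact hP ω
    · exact le_refl _

theorem stmt_0 {Ω : Type*} [Fintype Ω] (P : Ω → ℝ)
    (hP : ∀ ω, 0 ≤ P ω) (hPsum : ∑ ω, P ω = 1)
    (Yx Yx' : Ω → ℕ) (k h : ℕ) (hkh : k > h)
    (hord : Pr P {ω | Yx' ω = h} > 0 →
      Pr P ({ω | k ≤ Yx' ω} ∩ {ω | Yx' ω = h}) / Pr P {ω | Yx' ω = h} ≥
        Pr P ({ω | k ≤ Yx ω} ∩ {ω | Yx' ω = h}) / Pr P {ω | Yx' ω = h}) :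
    ∀ l, k ≤ l →
      Pr P ({ω | Yx ω = l} ∩ {ω | Yx' ω = h}) / Pr P {ω | Yx' ω = h} = 0 := by
  intro l hl
  rcases lt_or_eq_of_le (Pr_nonneg P hP {ω | Yx' ω = h}) with hpos | hzero
  · -- the numerator on the left of hord is zero
    have hempty : ({ω | k ≤ Yx' ω} ∩ {ω | Yx' ω = h} : Set Ω) = ∅ := by
      ext ω
      simp only [Set.mem_inter_iff, Set.mem_setOf_eq, Set.mem_empty_iff_false, iff_false]
      rintro ⟨h1, h2⟩
      omega
    have hPr0 : Pr P ({ω | k ≤ Yx' ω} ∩ {ω | Yx' ω = h}) = 0 := by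
      classical
      rw [hempty]
      simp [Pr]
    have := hord hpos
    rw [hPr0, zero_div] at this
    have hnum : Pr P ({ω | k ≤ Yx ω} ∩ {ω | Yx' ω = h}) ≤ 0 := by
      by_contra hc
      push_neg at hc
      have := div_pos hc hpos
      linarith
    have hnum0 : Pr P ({ω | k ≤ Yx ω} ∩ {ω | Yx' ω = h}) = 0 :=
      le_antisymm hnum (Pr_nonneg P hP _)
    have hsub : ({ω | Yx ω = l} ∩ {ω | Yx' ω = h} : Set Ω) ⊆
        ({ω | k ≤ Yx ω} ∩ {ω | Yx' ω = h}) := by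
      rintro ω ⟨h1, h2⟩
      exact ⟨by simp only [Set.mem_setOf_eq] at h1 ⊢; omega, h2⟩
    have h0 : Pr P ({ω | Yx ω = l} ∩ {ω | Yx' ω = h}) = 0 :=
      le_antisymm (hnum0 ▸ Pr_mono P hP hsub) (Pr_nonneg P hP _)
    rw [h0, zero_div]
  · rw [← hzero, div_zero]
end

section
/- Define two distributions on {0,1,2,3}: q₁ = (1/2, 1/6, 1/6, 1/6) and q₂ = (1/3, 1/3, 1/3, 0), and let Y(x,u) be as follows: Y(x,0)=x, Y(x,1)=0, Y(x,2)=1, Y(x,3)=1-x. Then the two induced models agree on all conditional probabilities P(Y(x,U) = y) for x, y ∈ {0,1}, yet disagree on the counterfactual P(Y(1,U) = 0 ∣ Y(0,U) = 1): under q₁ it equals 1/2 while under q₂ it equals 0. -/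
noncomputable def q₁ : Fin 4 → ℝ := ![1/2, 1/6, 1/6, 1/6]
noncomputable def q₂ : Fin 4 → ℝ := ![1/3, 1/3, 1/3, 0]

theorem stmt_10 (Y : ℕ → Fin 4 → ℕ)
    (hY0 : ∀ x, Y x 0 = x) (hY1 : ∀ x, Y x 1 = 0)
    (hY2 : ∀ x, Y x 2 = 1) (hY3 : ∀ x, Y x 3 = 1 - x) :
    (∀ x y : ℕ, x ≤ 1 → y ≤ 1 →
        Pr q₁ {u | Y x u = y} = Pr q₂ {u | Y x u = y}) ∧
      Pr q₁ ({u | Y 1 u = 0} ∩ {u | Y 0 u = 1}) / Pr q₁ {u | Y 0 u = 1} = 1/2 ∧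
      Pr q₂ ({u | Y 1 u = 0} ∩ {u | Y 0 u = 1}) / Pr q₂ {u | Y 0 u = 1} = 0 := by
  refine ⟨?_, ?_, ?_⟩
  · intro x y hx hy
    interval_cases x <;> interval_cases y <;>
      simp [Pr, Fin.sum_univ_four, q₁, q₂, hY0, hY1, hY2, hY3] <;> norm_num
  · simp [Pr, Fin.sum_univ_four, Set.mem_inter_iff, q₁, hY0 0, hY0 1, hY1 0, hY1 1,
      hY2 0, hY2 1, hY3 0, hY3 1]
    norm_num
  · simp [Pr, Fin.sum_univ_four, Set.mem_inter_iff, q₂, hY0 0, hY0 1, hY1 0, hY1 1,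
      hY2 0, hY2 1, hY3 0, hY3 1]
end
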